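/- Let T > 0 and u₀ ∈ L¹(ℝ³) ∩ L³(ℝ³). Suppose u : [0,T] × ℝ³ → ℝ is measurable, t ↦ u(t,·) is continuous from [0,T] into L³(ℝ³) with u(0,·) = u₀, and u is a mild solution of the cubic heat equation on [0,T] with initial data u₀. Then for every t ∈ [0,T], u(t,·) ∈ L¹(ℝ³), and moreover ‖u(t,·)‖_{L¹} ≤ ‖u₀‖_{L¹} + ∫₀ᵗ ‖u(s,·)‖_{L³}³ ds. -/

import Mathlib

open MeasureTheory

noncomputable section

/-- `ℝ³` as Euclidean space. -/
abbrev E3 := EuclideanSpace ℝ (Fin 3)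

/-- The heat kernel `G_t(x) = (4πt)^{-3/2} exp(-|x|²/(4t))` on `ℝ³`. -/
def heatKernel (t : ℝ) : E3 → ℝ := fun x =>
  (4 * Real.pi * t) ^ (-(3 : ℝ) / 2) * Real.exp (-‖x‖ ^ 2 / (4 * t))

/-- Convolution of two real valued functions on `ℝ³` w.r.t. Lebesgue measure. -/
def conv (f g : E3 → ℝ) : E3 → ℝ :=
  MeasureTheory.convolution f g (ContinuousLinearMap.mul ℝ ℝ) volume

/-- `u` is a mild solution of the cubic heat equation on `[0, T]` with initial data `u₀`. -/
def IsMildSolution (T : ℝ) (u₀ : E3 → ℝ) (u : ℝ → E3 → ℝ) : Prop :=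
  ∀ t ∈ Set.Ioc (0 : ℝ) T, ∀ᵐ x : E3,
    u t x = conv (heatKernel t) u₀ x +
      ∫ s in Set.Ioo (0 : ℝ) t, conv (heatKernel (t - s)) (fun y => u s y ^ 3) x

/-- The map `t ↦ u(t,·)` is continuous from `S` into `L^p(ℝ³)`. -/
def ContinuousInLp (p : ENNReal) (S : Set ℝ) (u : ℝ → E3 → ℝ) : Prop :=
  (∀ t ∈ S, MemLp (u t) p volume) ∧
  ∀ t₀ ∈ S, Filter.Tendsto (fun t => eLpNorm (u t - u t₀) p volume)
    (nhdsWithin t₀ S) (nhds 0)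

namespace Stmt14Aux

open Real ENNReal

lemma conv_def (f g : E3 → ℝ) (x : E3) : conv f g x = ∫ y, f y * g (x - y) := by
  simp [conv, convolution_def]

lemma heatKernel_measurable (t : ℝ) : Measurable (heatKernel t) := by
  unfold heatKernel
  fun_prop

lemma heatKernel_nonneg {t : ℝ} (ht : 0 < t) (x : E3) : 0 ≤ heatKernel t x := by
  unfold heatKernel
  have h1 : (0:ℝ) ≤ 4 * Real.pi * t :=
    mul_nonneg (by positivity) ht.le
  exact mul_nonneg (Real.rpow_nonneg h1 _) (Real.exp_nonneg _)

lemma finrank_E3 : Module.finrank ℝ E3 = 3 := by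
  simp [finrank_euclideanSpace_fin]

lemma integral_heatKernel {t : ℝ} (ht : 0 < t) : ∫ x : E3, heatKernel t x = 1 := by
  have hb : (0:ℝ) < 1 / (4 * t) := by positivity
  unfold heatKernel
  rw [integral_const_mul]
  have hrw : ∀ x : E3, -‖x‖ ^ 2 / (4 * t) = -(1 / (4 * t)) * ‖x‖ ^ 2 := by
    intro x; field_simp
  simp_rw [hrw]
  rw [GaussianFourier.integral_rexp_neg_mul_sq_norm hb, finrank_E3]
  have h2 : Real.pi / (1 / (4 * t)) = 4 * Real.pi * t := by
    field_simp
  rw [h2]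
  have h3 : (0:ℝ) < 4 * Real.pi * t := by positivity
  rw [← Real.rpow_add h3]
  norm_num

lemma integrable_heatKernel {t : ℝ} (ht : 0 < t) : Integrable (heatKernel t) := by
  have hb : (0:ℝ) < 1 / (4 * t) := by positivity
  have h := (GaussianFourier.integrable_cexp_neg_mul_sq_norm_add (V := E3)
    (b := ((1 / (4 * t) : ℝ) : ℂ)) (by simpa using hb) 0 0).norm
  unfold heatKernel
  refine Integrable.const_mul ?_ _
  have hEq : (fun v : E3 => ‖Complex.exp (-((1 / (4 * t) : ℝ) : ℂ) * (‖v‖:ℂ) ^ 2 +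
      0 * ((inner ℝ (0 : E3) v : ℝ) : ℂ))‖) = fun x : E3 => Real.exp (-‖x‖ ^ 2 / (4 * t)) := by
    funext v
    rw [Complex.norm_exp]
    congr 1
    have : ((-((1 / (4 * t) : ℝ) : ℂ) * (‖v‖:ℂ) ^ 2 + 0 * ((inner ℝ (0 : E3) v : ℝ) : ℂ))) =
        (((-‖v‖ ^ 2 / (4 * t) : ℝ)) : ℂ) := by
      push_cast
      ring
    rw [this, Complex.ofReal_re]
  rw [← hEq]
  exact h

lemma lintegral_heatKernel {t : ℝ} (ht : 0 < t) :
    ∫⁻ x : E3, (‖heatKernel t x‖₊ : ℝ≥0∞) = 1 := by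
  have h := MeasureTheory.ofReal_integral_eq_lintegral_ofReal (integrable_heatKernel ht)
    (Filter.Eventually.of_forall (heatKernel_nonneg ht))
  rw [integral_heatKernel ht] at h
  have h2 : ∀ x : E3, (‖heatKernel t x‖₊ : ℝ≥0∞) = ENNReal.ofReal (heatKernel t x) := fun x =>
    Real.enorm_eq_ofReal (heatKernel_nonneg ht x)
  simp_rw [h2]
  rw [← h]
  simp

lemma measurable_rpow_const (c : ℝ) : Measurable fun x : ℝ => x ^ c :=
  measurable_of_continuousOn_compl_singleton 0 fun x hx =>
    (Real.continuousAt_rpow_const x c (Or.inl (by simpa using hx))).continuousWithinAt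

lemma conv_congr_right (f : E3 → ℝ) {g g' : E3 → ℝ} (h : g =ᵐ[volume] g') :
    conv f g = conv f g' := by
  funext x
  simp only [conv_def]
  refine integral_congr_ae ?_
  have h2 : (fun y => g (x - y)) =ᵐ[volume] fun y => g' (x - y) :=
    (Measure.measurePreserving_sub_left (volume : Measure E3) x).quasiMeasurePreserving.ae_eq_comp h
  filter_upwards [h2] with y hy
  rw [hy]

lemma conv_measurable {f g : E3 → ℝ} (hf : Measurable f) (hg : Measurable g) :
    Measurable (conv f g) := by
  have h1 : Measurable fun p : E3 × E3 => f p.2 * g (p.1 - p.2) :=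
    (hf.comp measurable_snd).mul (hg.comp (measurable_fst.sub measurable_snd))
  have h2 := h1.stronglyMeasurable.integral_prod_right' (ν := (volume : Measure E3))
  have h3 : conv f g = fun x => ∫ y, f y * g (x - y) := funext (conv_def f g)
  rw [h3]
  exact h2.measurable

lemma conv_l1_bound {t : ℝ} (ht : 0 < t) {f : E3 → ℝ} (hf : Measurable f) :
    ∫⁻ x, (‖conv (heatKernel t) f x‖₊ : ℝ≥0∞) ≤ ∫⁻ x, (‖f x‖₊ : ℝ≥0∞) := by
  have hGm := heatKernel_measurable t
  have hjoint : Measurable fun z : E3 × E3 =>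
      ((‖heatKernel t z.2‖₊ : ℝ≥0∞) * (‖f (z.1 - z.2)‖₊ : ℝ≥0∞)) :=
    ((hGm.comp measurable_snd).enorm).mul
      ((hf.comp (measurable_fst.sub measurable_snd)).enorm)
  calc ∫⁻ x, (‖conv (heatKernel t) f x‖₊ : ℝ≥0∞)
      ≤ ∫⁻ x, ∫⁻ y, (‖heatKernel t y‖₊ : ℝ≥0∞) * (‖f (x - y)‖₊ : ℝ≥0∞) := by
        refine lintegral_mono fun x => ?_
        rw [conv_def]
        refine le_trans (enorm_integral_le_lintegral_enorm _) (le_of_eq ?_)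
        simp [nnnorm_mul, ENNReal.coe_mul, enorm_mul]; rfl
    _ = ∫⁻ y, ∫⁻ x, (‖heatKernel t y‖₊ : ℝ≥0∞) * (‖f (x - y)‖₊ : ℝ≥0∞) :=
        lintegral_lintegral_swap hjoint.aemeasurable
    _ = ∫⁻ y, (‖heatKernel t y‖₊ : ℝ≥0∞) * ∫⁻ x, (‖f (x - y)‖₊ : ℝ≥0∞) := by
        refine lintegral_congr fun y => ?_
        exact lintegral_const_mul _ ((hf.comp (measurable_id.sub measurable_const)).enorm)
    _ = ∫⁻ y, (‖heatKernel t y‖₊ : ℝ≥0∞) * ∫⁻ x, (‖f x‖₊ : ℝ≥0∞) := by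
        refine lintegral_congr fun y => ?_
        rw [lintegral_sub_right_eq_self (fun x => (‖f x‖₊ : ℝ≥0∞)) y]
    _ = (∫⁻ y, (‖heatKernel t y‖₊ : ℝ≥0∞)) * ∫⁻ x, (‖f x‖₊ : ℝ≥0∞) :=
        lintegral_mul_const _ hGm.enorm
    _ = ∫⁻ x, (‖f x‖₊ : ℝ≥0∞) := by rw [lintegral_heatKernel ht, one_mul]

lemma lintegral_cube (g : E3 → ℝ) :
    ∫⁻ x, (‖g x ^ 3‖₊ : ℝ≥0∞) = eLpNorm g 3 volume ^ 3 := by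
  rw [eLpNorm_eq_lintegral_rpow_enorm_toReal (by norm_num) (by norm_num)]
  have h3 : ((3:ℝ≥0∞)).toReal = (3:ℝ) := by norm_num
  rw [h3]
  rw [← ENNReal.rpow_natCast _ 3, ← ENNReal.rpow_mul]
  norm_num
  rfl

lemma duhamel {t : ℝ} (ht : 0 < t) (u : ℝ → E3 → ℝ)
    (humeas : Measurable (Function.uncurry u)) :
    ∫⁻ x, (‖∫ s in Set.Ioo (0:ℝ) t,
        conv (heatKernel (t - s)) (fun y => u s y ^ 3) x‖₊ : ℝ≥0∞)
      ≤ ∫⁻ s in Set.Ioo (0:ℝ) t, eLpNorm (u s) 3 volume ^ 3 := by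
  have husec : ∀ s, Measurable (u s) := fun s => humeas.of_uncurry_left
  have hFmeas : Measurable fun p : E3 × ℝ =>
      conv (heatKernel (t - p.2)) (fun y => u p.2 y ^ 3) p.1 := by
    have hu3 : Measurable fun q : (E3 × ℝ) × E3 => u q.1.2 (q.1.1 - q.2) :=
      humeas.comp ((measurable_fst.snd).prodMk ((measurable_fst.fst).sub measurable_snd))
    have hk : Measurable fun q : (E3 × ℝ) × E3 => heatKernel (t - q.1.2) q.2 := by
      unfold heatKernel
      have hb : Measurable fun q : (E3 × ℝ) × E3 => 4 * Real.pi * (t - q.1.2) := by fun_prop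
      have he : Measurable fun q : (E3 × ℝ) × E3 => -‖q.2‖ ^ 2 / (4 * (t - q.1.2)) := by
        fun_prop
      exact ((measurable_rpow_const _).comp hb).mul (Real.measurable_exp.comp he)
    have h1 : Measurable fun q : (E3 × ℝ) × E3 =>
        heatKernel (t - q.1.2) q.2 * u q.1.2 (q.1.1 - q.2) ^ 3 :=
      hk.mul (hu3.pow_const 3)
    have h2 := h1.stronglyMeasurable.integral_prod_right' (ν := (volume : Measure E3))
    have h3 : (fun p : E3 × ℝ => conv (heatKernel (t - p.2)) (fun y => u p.2 y ^ 3) p.1)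
        = fun p : E3 × ℝ => ∫ y, heatKernel (t - p.2) y * u p.2 (p.1 - y) ^ 3 := by
      funext p; exact conv_def _ _ _
    rw [h3]; exact h2.measurable
  calc ∫⁻ x, (‖∫ s in Set.Ioo (0:ℝ) t,
        conv (heatKernel (t - s)) (fun y => u s y ^ 3) x‖₊ : ℝ≥0∞)
      ≤ ∫⁻ x, ∫⁻ s in Set.Ioo (0:ℝ) t,
          (‖conv (heatKernel (t - s)) (fun y => u s y ^ 3) x‖₊ : ℝ≥0∞) :=
        lintegral_mono fun x => enorm_integral_le_lintegral_enorm _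
    _ = ∫⁻ s in Set.Ioo (0:ℝ) t, ∫⁻ x,
          (‖conv (heatKernel (t - s)) (fun y => u s y ^ 3) x‖₊ : ℝ≥0∞) :=
        lintegral_lintegral_swap hFmeas.enorm.aemeasurable
    _ ≤ ∫⁻ s in Set.Ioo (0:ℝ) t, eLpNorm (u s) 3 volume ^ 3 := by
        refine lintegral_mono_ae ?_
        filter_upwards [ae_restrict_mem measurableSet_Ioo] with s hs
        have hts : 0 < t - s := sub_pos.mpr hs.2
        exact le_trans (conv_l1_bound hts ((husec s).pow_const 3))
          (le_of_eq (lintegral_cube (u s)))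

lemma exists_bound (T : ℝ) (hT : 0 < T) (u : ℝ → E3 → ℝ)
    (humeas : Measurable (Function.uncurry u))
    (hucont : ContinuousInLp 3 (Set.Icc 0 T) u) :
    ∃ M : ℝ≥0∞, M ≠ ⊤ ∧ ∀ s ∈ Set.Icc (0:ℝ) T, eLpNorm (u s) 3 volume ≤ M := by
  have husec : ∀ s : ℝ, AEStronglyMeasurable (u s) (volume : Measure E3) := fun s =>
    (humeas.of_uncurry_left).aestronglyMeasurable
  have hcont : ContinuousOn (fun s => eLpNorm (u s) 3 volume) (Set.Icc 0 T) := by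
    intro t₀ ht₀
    have hne : eLpNorm (u t₀) 3 volume ≠ ⊤ := (hucont.1 t₀ ht₀).2.ne
    unfold ContinuousWithinAt
    rw [ENNReal.tendsto_nhds hne]
    intro ε hε
    have h0 := ENNReal.tendsto_nhds_zero.mp (hucont.2 t₀ ht₀) ε hε
    filter_upwards [h0] with s hs
    constructor
    · refine tsub_le_iff_right.mpr ?_
      have hsplit : u t₀ = (u t₀ - u s) + u s := by funext x; simp
      calc eLpNorm (u t₀) 3 volume = eLpNorm ((u t₀ - u s) + u s) 3 volume := by
            rw [← hsplit]
        _ ≤ eLpNorm (u t₀ - u s) 3 volume + eLpNorm (u s) 3 volume :=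
            eLpNorm_add_le ((husec t₀).sub (husec s)) (husec s) (by norm_num)
        _ = eLpNorm (u s - u t₀) 3 volume + eLpNorm (u s) 3 volume := by
            rw [eLpNorm_sub_comm]
        _ ≤ ε + eLpNorm (u s) 3 volume := add_le_add_left hs _
        _ = eLpNorm (u s) 3 volume + ε := add_comm _ _
    · have hsplit : u s = (u s - u t₀) + u t₀ := by funext x; simp
      calc eLpNorm (u s) 3 volume = eLpNorm ((u s - u t₀) + u t₀) 3 volume := by
            rw [← hsplit]
        _ ≤ eLpNorm (u s - u t₀) 3 volume + eLpNorm (u t₀) 3 volume :=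
            eLpNorm_add_le ((husec s).sub (husec t₀)) (husec t₀) (by norm_num)
        _ ≤ ε + eLpNorm (u t₀) 3 volume := add_le_add_left hs _
        _ = eLpNorm (u t₀) 3 volume + ε := add_comm _ _
  obtain ⟨a, ha, hmax⟩ := isCompact_Icc.exists_isMaxOn (Set.nonempty_Icc.mpr hT.le) hcont
  exact ⟨_, (hucont.1 a ha).2.ne, fun s hs => hmax hs⟩

end Stmt14Aux

open ENNReal in
theorem stmt_14 (T : ℝ) (hT : 0 < T) (u₀ : E3 → ℝ)
    (hu₀1 : MemLp u₀ 1 volume) (hu₀3 : MemLp u₀ 3 volume)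
    (u : ℝ → E3 → ℝ) (humeas : Measurable (Function.uncurry u))
    (hucont : ContinuousInLp 3 (Set.Icc 0 T) u) (hu0 : u 0 =ᵐ[volume] u₀)
    (hmild : IsMildSolution T u₀ u) :
    ∀ t ∈ Set.Icc (0 : ℝ) T,
      MemLp (u t) 1 volume ∧
      eLpNorm (u t) 1 volume ≤
        eLpNorm u₀ 1 volume + ∫⁻ s in Set.Ioo (0 : ℝ) t, eLpNorm (u s) 3 volume ^ 3 := by
  obtain ⟨M, hMne, hM⟩ := Stmt14Aux.exists_bound T hT u humeas hucont
  have husec : ∀ s : ℝ, Measurable (u s) := fun s => humeas.of_uncurry_left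
  intro t ht
  have key : eLpNorm (u t) 1 volume ≤ eLpNorm u₀ 1 volume +
      ∫⁻ s in Set.Ioo (0:ℝ) t, eLpNorm (u s) 3 volume ^ 3 := by
    rcases eq_or_lt_of_le ht.1 with h0 | h0
    · rw [← h0, eLpNorm_congr_ae hu0]
      exact le_self_add
    · obtain ⟨u₀', hu₀'sm, hu₀'eq⟩ := hu₀1.1
      have hu₀'meas : Measurable u₀' := hu₀'sm.measurable
      have hconv : conv (heatKernel t) u₀ = conv (heatKernel t) u₀' :=
        Stmt14Aux.conv_congr_right _ hu₀'eq
      have hmt := hmild t ⟨h0, ht.2⟩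
      rw [eLpNorm_one_eq_lintegral_enorm]
      have hA : Measurable (conv (heatKernel t) u₀') :=
        Stmt14Aux.conv_measurable (Stmt14Aux.heatKernel_measurable t) hu₀'meas
      calc ∫⁻ x, (‖u t x‖₊ : ℝ≥0∞)
          = ∫⁻ x, (‖conv (heatKernel t) u₀' x + ∫ s in Set.Ioo (0:ℝ) t,
              conv (heatKernel (t - s)) (fun y => u s y ^ 3) x‖₊ : ℝ≥0∞) := by
            refine lintegral_congr_ae (hmt.mono fun x hx => ?_)
            simp only []
            rw [hx, hconv]
        _ ≤ ∫⁻ x, ((‖conv (heatKernel t) u₀' x‖₊ : ℝ≥0∞) + (‖∫ s in Set.Ioo (0:ℝ) t,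
              conv (heatKernel (t - s)) (fun y => u s y ^ 3) x‖₊ : ℝ≥0∞)) := by
            refine lintegral_mono fun x => ?_
            exact ENNReal.coe_le_coe.mpr (nnnorm_add_le _ _)
        _ = (∫⁻ x, (‖conv (heatKernel t) u₀' x‖₊ : ℝ≥0∞)) + ∫⁻ x, (‖∫ s in Set.Ioo (0:ℝ) t,
              conv (heatKernel (t - s)) (fun y => u s y ^ 3) x‖₊ : ℝ≥0∞) :=
            lintegral_add_left hA.enorm _
        _ ≤ (∫⁻ x, (‖u₀' x‖₊ : ℝ≥0∞)) + ∫⁻ s in Set.Ioo (0:ℝ) t, eLpNorm (u s) 3 volume ^ 3 :=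
            add_le_add (Stmt14Aux.conv_l1_bound h0 hu₀'meas) (Stmt14Aux.duhamel h0 u humeas)
        _ = eLpNorm u₀ 1 volume + ∫⁻ s in Set.Ioo (0:ℝ) t, eLpNorm (u s) 3 volume ^ 3 := by
            rw [eLpNorm_one_eq_lintegral_enorm]
            congr 1
            refine lintegral_congr_ae (hu₀'eq.mono fun x hx => ?_)
            simp only []
            rw [hx]
            rfl
  have hfin : (∫⁻ s in Set.Ioo (0:ℝ) t, eLpNorm (u s) 3 volume ^ 3) < ⊤ := by
    calc ∫⁻ s in Set.Ioo (0:ℝ) t, eLpNorm (u s) 3 volume ^ 3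
        ≤ ∫⁻ s in Set.Ioo (0:ℝ) t, M ^ 3 := by
          refine lintegral_mono_ae ?_
          filter_upwards [ae_restrict_mem measurableSet_Ioo] with s hs
          exact pow_le_pow_left' (hM s ⟨hs.1.le, hs.2.le.trans ht.2⟩) 3
      _ = M ^ 3 * volume (Set.Ioo (0:ℝ) t) := setLIntegral_const _ _
      _ < ⊤ := ENNReal.mul_lt_top (ENNReal.pow_ne_top hMne).lt_top
          (by simp [Real.volume_Ioo])
  refine ⟨⟨(husec t).aestronglyMeasurable, ?_⟩, key⟩
  exact lt_of_le_of_lt key (ENNReal.add_lt_top.mpr ⟨hu₀1.2, hfin⟩)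

end
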